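/- For ρ = e^{πi/3} and a = (1+ρ)/3, the Weierstrass zeta function of the lattice Λ_ρ satisfies 3ζ(a; ρ) = η₁(ρ) + η₂(ρ); equivalently, Hecke's function Z(1/3, 1/3, ρ) := ζ((1+ρ)/3; ρ) − (1/3)η₁(ρ) − (1/3)η₂(ρ) vanishes, so that a = (1+ρ)/3 is a nontrivial critical point of the Green function on the rhombic torus E_ρ. -/

import Mathlib

open Complex Filter Topology

noncomputable section

/-- The lattice `Λ_τ = ℤ + τℤ`. -/
def Lam (τ : ℂ) : Set ℂ := {ω | ∃ m n : ℤ, ω = (m : ℂ) + (n : ℂ) * τ}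

/-- The nonzero lattice points. -/
def Lam' (τ : ℂ) : Set ℂ := {ω | ω ∈ Lam τ ∧ ω ≠ 0}

/-- The Weierstrass elliptic function `℘(z; τ)`. -/
def wp (τ z : ℂ) : ℂ :=
  1 / z ^ 2 + ∑' ω : Lam' τ, (1 / (z - (ω : ℂ)) ^ 2 - 1 / (ω : ℂ) ^ 2)

/-- The Weierstrass zeta function `ζ(z; τ)`. -/
def wzeta (τ z : ℂ) : ℂ :=
  1 / z + ∑' ω : Lam' τ, (1 / (z - (ω : ℂ)) + 1 / (ω : ℂ) + z / (ω : ℂ) ^ 2)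

/-- The Weierstrass sigma function `σ(z; τ)`. -/
def wsigma (τ z : ℂ) : ℂ :=
  z * ∏' ω : Lam' τ,
    ((1 - z / (ω : ℂ)) * Complex.exp (z / (ω : ℂ) + z ^ 2 / (2 * (ω : ℂ) ^ 2)))

/-- `℘'(z; τ)`. -/
def wpd (τ : ℂ) : ℂ → ℂ := deriv (wp τ)

/-- `℘''(z; τ)`. -/
def wpdd (τ : ℂ) : ℂ → ℂ := deriv (deriv (wp τ))

/-- The constant `B(A)`. -/
def Bc (τ p A : ℂ) : ℂ :=
  A ^ 2 - wzeta τ (2 * p) * A - 3 / 4 * wp τ (2 * p) - 2 * wp τ p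

/-- The potential `q(z; A)`. -/
def qpot (τ p A z : ℂ) : ℂ :=
  2 * wp τ z + 3 / 4 * (wp τ (z + p) + wp τ (z - p))
    + A * (wzeta τ (z + p) - wzeta τ (z - p)) + Bc τ p A

/-- The singular set `S = Λ_τ ∪ (p + Λ_τ) ∪ (−p + Λ_τ)`. -/
def Sset (τ p : ℂ) : Set ℂ :=
  Lam τ ∪ {z | z - p ∈ Lam τ} ∪ {z | z + p ∈ Lam τ}

/-- The unique elliptic solution `Φ_e(z; A)` of the second symmetric product equation. -/
def Phie (τ p A z : ℂ) : ℂ :=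
  wp τ z + (A / 2 - 3 * wpdd τ p / (8 * wpd τ p)) * (wzeta τ (z + p) - wzeta τ (z - p))
    - A ^ 2 + (wpdd τ p / (2 * wpd τ p) - wzeta τ p) * A
    - wp τ p + 3 / 4 * (wpdd τ p / wpd τ p) * wzeta τ p
    + 3 / 16 * (wpdd τ p ^ 2 / wpd τ p ^ 2)

/-- The cubic factor `Y₁(A)`. -/
def Y1 (τ p A : ℂ) : ℂ :=
  A ^ 3 - 5 * wpdd τ p / (4 * wpd τ p) * A ^ 2
    + 3 * (wp τ p + wpdd τ p ^ 2 / (16 * wpd τ p ^ 2)) * A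
    + wpd τ p / 2 - 9 * wpdd τ p / (4 * wpd τ p) * wp τ p
    + 9 / 64 * (wpdd τ p ^ 3 / wpd τ p ^ 3)

/-- The cubic factor `Y₂(A)`. -/
def Y2 (τ p A : ℂ) : ℂ :=
  A ^ 3 - wpdd τ p / (4 * wpd τ p) * A ^ 2
    - 5 / 16 * (wpdd τ p ^ 2 / wpd τ p ^ 2) * A
    + 2 * wpd τ p - 3 / 64 * (wpdd τ p ^ 3 / wpd τ p ^ 3)

/-- The quasi-period `η₁ = 2ζ(1/2)`. -/
def eta1 (τ : ℂ) : ℂ := 2 * wzeta τ (1 / 2)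

/-- The quasi-period `η₂ = 2ζ(τ/2)`. -/
def eta2 (τ : ℂ) : ℂ := 2 * wzeta τ (τ / 2)

def rr : ℂ := Complex.exp (Real.pi * Complex.I / 3)

lemma rr_arg : (↑Real.pi * Complex.I / 3).re = 0 ∧ (↑Real.pi * Complex.I / 3).im = Real.pi / 3 := by
  constructor <;> simp <;> ring

lemma rr_im_pos : 0 < rr.im := by
  rw [rr, Complex.exp_im, rr_arg.1, rr_arg.2, Real.exp_zero, one_mul]
  exact Real.sin_pos_of_pos_of_lt_pi (by positivity) (by linarith [Real.pi_pos])

lemma rr_im_ne : rr.im ≠ 0 := ne_of_gt rr_im_pos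

lemma rr_re : rr.re = 1 / 2 := by
  rw [rr, Complex.exp_re, rr_arg.1, rr_arg.2, Real.exp_zero, one_mul, Real.cos_pi_div_three]

lemma rr_im_sq : rr.im ^ 2 = 3 / 4 := by
  rw [rr, Complex.exp_im, rr_arg.1, rr_arg.2, Real.exp_zero, one_mul, Real.sin_pi_div_three]
  rw [div_pow, Real.sq_sqrt (by norm_num : (0:ℝ) ≤ 3)]
  norm_num

lemma rr_cube : rr ^ 3 = -1 := by
  rw [rr, ← Complex.exp_nat_mul]
  rw [show (3:ℕ) * (↑Real.pi * Complex.I / 3) = ↑Real.pi * Complex.I by push_cast; ring]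
  exact Complex.exp_pi_mul_I

lemma rr_sq : rr ^ 2 = rr - 1 := by
  have h : (rr + 1) * (rr ^ 2 - rr + 1) = 0 := by linear_combination rr_cube
  rcases mul_eq_zero.1 h with h1 | h2
  · exfalso
    have h2 : (rr + 1).im = 0 := by rw [h1]; rfl
    simp [Complex.add_im] at h2
    exact rr_im_ne h2
  · linear_combination h2

lemma rr_mul_one_sub : rr * (1 - rr) = 1 := by linear_combination -rr_sq

lemma rr_ne_zero : rr ≠ 0 := by
  intro h; have := rr_mul_one_sub; rw [h] at this; norm_num at this

lemma rr_inv : rr⁻¹ = 1 - rr := inv_eq_of_mul_eq_one_right rr_mul_one_sub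

lemma coeffs_eq {m n : ℤ} (h : (m : ℂ) + (n : ℂ) * rr = 0) : m = 0 ∧ n = 0 := by
  have him := congrArg Complex.im h
  simp [Complex.add_im, Complex.mul_im] at him
  rcases him with h' | h'
  · have hn : n = 0 := by exact_mod_cast h'
    subst hn
    simp at h
    exact ⟨by exact_mod_cast h, rfl⟩
  · exact absurd h' rr_im_ne

lemma mem_lam (m n : ℤ) : ((m : ℂ) + (n : ℂ) * rr) ∈ Lam rr := ⟨m, n, rfl⟩

lemma one_mem_lam' : (1 : ℂ) ∈ Lam' rr := ⟨⟨1, 0, by push_cast; ring⟩, one_ne_zero⟩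

lemma lam_neg {ω : ℂ} (h : ω ∈ Lam rr) : -ω ∈ Lam rr := by
  obtain ⟨m, n, rfl⟩ := h; exact ⟨-m, -n, by push_cast; ring⟩

lemma lam_one_sub {ω : ℂ} (h : ω ∈ Lam rr) : 1 - ω ∈ Lam rr := by
  obtain ⟨m, n, rfl⟩ := h; exact ⟨1 - m, -n, by push_cast; ring⟩

lemma lam_rot {ω : ℂ} (h : ω ∈ Lam rr) : rr * ω ∈ Lam rr := by
  obtain ⟨m, n, rfl⟩ := h
  exact ⟨-n, m + n, by push_cast; linear_combination (n : ℂ) * rr_sq⟩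

lemma lam_rot' {ω : ℂ} (h : ω ∈ Lam rr) : (1 - rr) * ω ∈ Lam rr := by
  obtain ⟨m, n, rfl⟩ := h
  exact ⟨m + n, -m, by push_cast; linear_combination (-(n : ℂ)) * rr_sq⟩

lemma one_sub_rr_ne : (1 : ℂ) - rr ≠ 0 := by
  intro h
  have h2 := rr_mul_one_sub
  rw [h, mul_zero] at h2
  norm_num at h2

def negE : ↥(Lam' rr) ≃ ↥(Lam' rr) where
  toFun ω := ⟨-ω, lam_neg ω.2.1, neg_ne_zero.2 ω.2.2⟩
  invFun ω := ⟨-ω, lam_neg ω.2.1, neg_ne_zero.2 ω.2.2⟩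
  left_inv ω := by ext; simp
  right_inv ω := by ext; simp

def rotE : ↥(Lam' rr) ≃ ↥(Lam' rr) where
  toFun ω := ⟨rr * ω, lam_rot ω.2.1, mul_ne_zero rr_ne_zero ω.2.2⟩
  invFun ω := ⟨(1 - rr) * ω, lam_rot' ω.2.1, mul_ne_zero one_sub_rr_ne ω.2.2⟩
  left_inv ω := by
    ext
    show (1 - rr) * (rr * (ω : ℂ)) = ω
    linear_combination (ω : ℂ) * rr_mul_one_sub
  right_inv ω := by
    ext
    show rr * ((1 - rr) * (ω : ℂ)) = ω
    linear_combination (ω : ℂ) * rr_mul_one_sub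

def zterm (z ω : ℂ) : ℂ := 1 / (z - ω) + 1 / ω + z / ω ^ 2

lemma normSq_lower (m n : ℤ) :
    ((m : ℝ) ^ 2 + (n : ℝ) ^ 2) / 2 ≤ Complex.normSq ((m : ℂ) + (n : ℂ) * rr) := by
  rw [Complex.normSq_apply]
  simp only [Complex.add_re, Complex.add_im, Complex.mul_re, Complex.mul_im,
    Complex.intCast_re, Complex.intCast_im]
  rw [rr_re]
  have h3 : ((n:ℝ) * rr.im) * ((n:ℝ) * rr.im) = 3/4 * (n:ℝ)^2 := by
    linear_combination ((n:ℝ)^2) * rr_im_sq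
  nlinarith [sq_nonneg ((m : ℝ) + (n : ℝ))]

def Fmap (x : {x : Fin 2 → ℤ // x ≠ 0}) : ↥(Lam' rr) :=
  ⟨(x.1 0 : ℂ) + (x.1 1 : ℂ) * rr, mem_lam _ _, by
    intro h
    obtain ⟨h0, h1⟩ := coeffs_eq h
    apply x.2
    funext i
    fin_cases i
    · exact h0
    · exact h1⟩

lemma Fmap_bij : Function.Bijective Fmap := by
  constructor
  · intro x y hxy
    have h := congrArg Subtype.val hxy
    simp only [Fmap] at h
    have h2 : ((x.1 0 - y.1 0 : ℤ) : ℂ) + ((x.1 1 - y.1 1 : ℤ) : ℂ) * rr = 0 := by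
      push_cast
      linear_combination h
    obtain ⟨h0, h1⟩ := coeffs_eq h2
    apply Subtype.ext
    funext i
    fin_cases i
    · simpa using sub_eq_zero.1 h0
    · simpa using sub_eq_zero.1 h1
  · intro ω
    obtain ⟨⟨m, n, hw⟩, hne⟩ := ω.2
    refine ⟨⟨![m, n], ?_⟩, ?_⟩
    · intro h
      apply hne
      rw [hw]
      have hm : m = 0 := by have := congrFun h 0; simpa using this
      have hn : n = 0 := by have := congrFun h 1; simpa using this
      simp [hm, hn]
    · apply Subtype.ext
      show ((![m,n] 0 : ℤ) : ℂ) + ((![m,n] 1 : ℤ) : ℂ) * rr = (ω : ℂ)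
      simp [hw]

lemma summable_zterm (z : ℂ) : Summable (fun ω : ↥(Lam' rr) => zterm z (ω : ℂ)) := by
  classical
  set g : (Fin 2 → ℤ) → ℂ :=
    fun x => if x = 0 then 0 else zterm z ((x 0 : ℂ) + (x 1 : ℂ) * rr) with hg
  have hgs : Summable g := by
    set C : ℝ := 64 * ‖z‖ ^ 2 + 64 with hC
    have hsum : Summable fun x : Fin 2 → ℤ => C * ‖x‖ ^ (-(3:ℝ)) :=
      (EisensteinSeries.summable_one_div_norm_rpow (by norm_num)).mul_left C
    refine Summable.of_norm_bounded_eventually hsum ?_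
    have hev : ∀ᶠ x : Fin 2 → ℤ in cofinite, 4 * ‖z‖ + 4 ≤ ‖x‖ := by
      rw [← cocompact_eq_cofinite]
      exact tendsto_norm_cocompact_atTop.eventually_ge_atTop _
    filter_upwards [hev] with x hx
    have habs : (0:ℝ) ≤ ‖z‖ := norm_nonneg _
    have hN4 : (4:ℝ) ≤ ‖x‖ := by linarith
    have hN0 : (0:ℝ) < ‖x‖ := by linarith
    have hx0 : x ≠ 0 := by
      intro h; rw [h] at hN4; simp at hN4; linarith
    set ω : ℂ := (x 0 : ℂ) + (x 1 : ℂ) * rr with hω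
    have hωlow : ‖x‖ / 2 ≤ ‖ω‖ := by
      have h1 := normSq_lower (x 0) (x 1)
      have h2 : ‖x‖ ^ 2 ≤ ((x 0 : ℝ)) ^ 2 + ((x 1 : ℝ)) ^ 2 := by
        rw [EisensteinSeries.norm_eq_max_natAbs]
        rcases le_total ((x 0).natAbs) ((x 1).natAbs) with h | h
        · rw [max_eq_right h]
          have h3 : ((x 1).natAbs : ℝ) ^ 2 = ((x 1 : ℝ)) ^ 2 := by
            rw [Nat.cast_natAbs]; push_cast; rw [_root_.sq_abs]
          nlinarith [sq_nonneg ((x 0 : ℝ))]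
        · rw [max_eq_left h]
          have h3 : ((x 0).natAbs : ℝ) ^ 2 = ((x 0 : ℝ)) ^ 2 := by
            rw [Nat.cast_natAbs]; push_cast; rw [_root_.sq_abs]
          nlinarith [sq_nonneg ((x 1 : ℝ))]
      have h3 : (‖x‖ / 2) ^ 2 ≤ ‖ω‖ ^ 2 := by
        rw [Complex.sq_norm]
        nlinarith
      nlinarith [norm_nonneg ω]
    have hω0 : ω ≠ 0 := by
      intro h
      rw [h] at hωlow
      simp at hωlow
      linarith
    have hzω : ‖x‖ / 4 ≤ ‖z - ω‖ := by
      have h1 : ‖ω‖ - ‖z‖ ≤ ‖z - ω‖ := by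
        have h2 := norm_sub_norm_le ω z
        rwa [show ω - z = -(z - ω) by ring, norm_neg] at h2
      have h2 : ‖z‖ ≤ ‖x‖ / 4 - 1 := by linarith
      linarith
    have hzω0 : z - ω ≠ 0 := by
      intro h
      rw [h] at hzω
      simp at hzω
      linarith
    have hval : zterm z ω = z ^ 2 / (ω ^ 2 * (z - ω)) := by
      rw [zterm]
      field_simp
      ring
    rw [hg]
    simp only [if_neg hx0]
    have hrpow : C * ‖x‖ ^ (-(3:ℝ)) = C * (1 / ‖x‖ ^ (3:ℕ)) := by
      rw [Real.rpow_neg (le_of_lt hN0), one_div]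
      norm_cast
    rw [← hω, hval, norm_div, norm_mul, norm_pow, norm_pow, hrpow]
    have hD : ‖x‖ ^ (3:ℕ) / 16 ≤ ‖ω‖ ^ 2 * ‖z - ω‖ := by
      calc ‖x‖ ^ (3:ℕ) / 16 = (‖x‖/2)^2 * (‖x‖/4) := by ring
        _ ≤ ‖ω‖ ^ 2 * ‖z - ω‖ := by
            apply mul_le_mul (by nlinarith) hzω (by positivity) (by positivity)
    have hD0 : (0:ℝ) < ‖x‖ ^ (3:ℕ) / 16 := by positivity
    calc ‖z‖ ^ 2 / (‖ω‖ ^ 2 * ‖z - ω‖)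
        ≤ ‖z‖ ^ 2 / (‖x‖ ^ (3:ℕ) / 16) :=
          by apply div_le_div_of_nonneg_left (by positivity) hD0 hD
      _ = 16 * ‖z‖ ^ 2 * (1 / ‖x‖ ^ (3:ℕ)) := by
          field_simp
      _ ≤ C * (1 / ‖x‖ ^ (3:ℕ)) := by
          have : 16 * ‖z‖ ^ 2 ≤ C := by rw [hC]; nlinarith
          apply mul_le_mul_of_nonneg_right this (by positivity)
  have h2 : Summable (fun x : {x : Fin 2 → ℤ // x ≠ 0} =>
      zterm z ((x.1 0 : ℂ) + (x.1 1 : ℂ) * rr)) := by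
    have h3 := hgs.subtype {x : Fin 2 → ℤ | x ≠ 0}
    refine h3.congr ?_
    intro x
    show g x.1 = _
    rw [hg]
    exact if_neg x.2
  exact (Equiv.ofBijective Fmap Fmap_bij).summable_iff.1 h2

lemma wzeta_eq (z : ℂ) : wzeta rr z = 1 / z + ∑' ω : Lam' rr, zterm z (ω : ℂ) := rfl

lemma zterm_rot (z ω : ℂ) : zterm (rr * z) (rr * ω) = (1 - rr) * zterm z ω := by
  simp only [zterm, one_div, div_eq_mul_inv, mul_pow, mul_inv, ← inv_pow, rr_inv,
    show rr * z - rr * ω = rr * (z - ω) by ring]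
  linear_combination ((1 - rr) * z * (ω⁻¹)^2 + (z - ω)⁻¹ + ω⁻¹) * rr_mul_one_sub
    + ((z - ω)⁻¹ + ω⁻¹) * rr_sq

lemma wzeta_rot (z : ℂ) : wzeta rr (rr * z) = (1 - rr) * wzeta rr z := by
  rw [wzeta_eq, wzeta_eq, mul_add]
  congr 1
  · rw [one_div, one_div, mul_inv, rr_inv]
  · rw [← tsum_mul_left, ← rotE.tsum_eq (fun ω : ↥(Lam' rr) => zterm (rr * z) (ω : ℂ))]
    exact tsum_congr fun ω => zterm_rot z ω

lemma zterm_neg (z ω : ℂ) : zterm (-z) (-ω) = - zterm z ω := by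
  simp only [zterm, one_div, div_eq_mul_inv, neg_sq,
    show -z - -ω = -(z - ω) by ring, inv_neg]
  ring

lemma wzeta_neg (z : ℂ) : wzeta rr (-z) = - wzeta rr z := by
  rw [wzeta_eq, wzeta_eq, neg_add]
  congr 1
  · rw [one_div, one_div, inv_neg]
  · rw [← tsum_neg, ← negE.tsum_eq (fun ω : ↥(Lam' rr) => zterm (-z) (ω : ℂ))]
    exact tsum_congr fun ω => zterm_neg z ω

def sigFun (ω : ↥(Lam' rr)) : ↥(Lam' rr) :=
  if h : (ω : ℂ) = 1 then ω
  else ⟨1 - ω, lam_one_sub ω.2.1, sub_ne_zero.2 (Ne.symm h)⟩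

lemma sigFun_of_eq {ω : ↥(Lam' rr)} (h : (ω : ℂ) = 1) : sigFun ω = ω := by
  unfold sigFun; exact dif_pos h

lemma sigFun_of_ne {ω : ↥(Lam' rr)} (h : (ω : ℂ) ≠ 1) :
    sigFun ω = ⟨1 - ω, lam_one_sub ω.2.1, sub_ne_zero.2 (Ne.symm h)⟩ := by
  unfold sigFun; exact dif_neg h

lemma sig_invol (ω : ↥(Lam' rr)) : sigFun (sigFun ω) = ω := by
  by_cases h : (ω : ℂ) = 1
  · rw [sigFun_of_eq h, sigFun_of_eq h]
  · rw [sigFun_of_ne h]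
    have h2 : ((⟨1 - ω, lam_one_sub ω.2.1, sub_ne_zero.2 (Ne.symm h)⟩ : ↥(Lam' rr)) : ℂ) ≠ 1 := by
      show (1 : ℂ) - ω ≠ 1
      intro hc
      exact ω.2.2 (by linear_combination -hc)
    rw [sigFun_of_ne h2]
    apply Subtype.ext
    show 1 - (1 - (ω : ℂ)) = ω
    ring

def sigE : ↥(Lam' rr) ≃ ↥(Lam' rr) := ⟨sigFun, sigFun, sig_invol, sig_invol⟩

lemma sum_rel (u : ℂ) : wzeta rr u + wzeta rr (1 - u) = 2 * wzeta rr (1 / 2) := by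
  classical
  have S1 := summable_zterm u
  have S2 := summable_zterm (1 - u)
  have S3 := summable_zterm (1 / 2 : ℂ)
  set b : ↥(Lam' rr) := ⟨1, one_mem_lam'⟩ with hbdef
  set h : ↥(Lam' rr) → ℂ :=
    fun ω => 1 / (u - ω) + 1 / (1 - u - ω) - 2 / (1 / 2 - ω) with hh
  have hval : ∀ ω : ↥(Lam' rr),
      zterm u ω + zterm (1 - u) ω - 2 * zterm (1 / 2) ω = h ω := by
    intro ω
    simp only [hh, zterm, one_div]
    ring
  have hsum : Summable h := ((S1.add S2).sub (S3.mul_left 2)).congr hval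
  have hcomb : (∑' ω : ↥(Lam' rr), zterm u (ω : ℂ)) + (∑' ω : ↥(Lam' rr), zterm (1 - u) (ω : ℂ))
      - 2 * (∑' ω : ↥(Lam' rr), zterm (1 / 2) (ω : ℂ)) = ∑' ω : ↥(Lam' rr), h ω := by
    rw [← Summable.tsum_add S1 S2, ← tsum_mul_left, ← Summable.tsum_sub (S1.add S2) (S3.mul_left 2)]
    exact tsum_congr hval
  have hsig : ∀ ω : ↥(Lam' rr),
      (if sigE ω = b then 0 else h (sigE ω)) = - (if ω = b then 0 else h ω) := by
    intro ω
    by_cases hωb : ω = b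
    · subst hωb
      have hsb : sigE b = b := sigFun_of_eq rfl
      simp [hsb]
    · have hω1 : (ω : ℂ) ≠ 1 := fun hc => hωb (Subtype.ext hc)
      have hs : sigE ω = ⟨1 - ω, lam_one_sub ω.2.1, sub_ne_zero.2 (Ne.symm hω1)⟩ :=
        sigFun_of_ne hω1
      have hsb : sigE ω ≠ b := by
        rw [hs]
        intro hc
        have h2 : (1 : ℂ) - ω = 1 := congrArg Subtype.val hc
        exact ω.2.2 (by linear_combination -h2)
      rw [if_neg hsb, if_neg hωb, hs]
      show (1:ℂ) / (u - (1 - ω)) + 1 / (1 - u - (1 - ω)) - 2 / (1/2 - (1 - ω)) = - h ω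
      rw [hh]
      have e1 : u - (1 - (ω:ℂ)) = -(1 - u - ω) := by ring
      have e2 : (1:ℂ) - u - (1 - ω) = -(u - ω) := by ring
      have e3 : (1:ℂ)/2 - (1 - ω) = -(1/2 - ω) := by ring
      rw [e1, e2, e3, div_neg, div_neg, div_neg]
      ring
  have hTzero : (∑' ω : ↥(Lam' rr), if ω = b then 0 else h ω) = 0 := by
    have h1 : (∑' ω : ↥(Lam' rr), if ω = b then 0 else h ω)
        = - ∑' ω : ↥(Lam' rr), (if ω = b then 0 else h ω) := by
      conv_lhs => rw [← sigE.tsum_eq (fun ω : ↥(Lam' rr) => if ω = b then 0 else h ω)]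
      rw [← tsum_neg]
      exact tsum_congr hsig
    linear_combination h1 / 2
  have hsumh : (∑' ω : ↥(Lam' rr), h ω) = h b := by
    rw [Summable.tsum_eq_add_tsum_ite hsum b, hTzero, add_zero]
  have hbv : h b = 1 / (u - 1) - 1 / u + 4 := by
    rw [hh]
    show (1:ℂ) / (u - 1) + 1 / (1 - u - 1) - 2 / (1/2 - 1) = _
    rw [show (1:ℂ) - u - 1 = -u by ring, show (1:ℂ)/2 - 1 = -(1/2) by norm_num]
    simp only [one_div, inv_neg]
    norm_num
    ring
  have hfin := hcomb.trans (hsumh.trans hbv)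
  rw [wzeta_eq, wzeta_eq, wzeta_eq]
  have hinv1 : (u - 1)⁻¹ = -((1 - u)⁻¹) := by
    rw [show u - 1 = -(1 - u) by ring, inv_neg]
  simp only [one_div] at hfin ⊢
  rw [hinv1] at hfin
  norm_num at hfin ⊢
  linear_combination hfin


/-- for `ρ = e^{πi/3}` and `a = (1+ρ)/3`, Hecke's function
`Z(1/3, 1/3, ρ)` vanishes: `3ζ(a; ρ) = η₁(ρ) + η₂(ρ)`. -/
theorem stmt_19 :
    3 * wzeta (Complex.exp (Real.pi * Complex.I / 3))
        ((1 + Complex.exp (Real.pi * Complex.I / 3)) / 3)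
      = eta1 (Complex.exp (Real.pi * Complex.I / 3))
        + eta2 (Complex.exp (Real.pi * Complex.I / 3)) := by
  have hrr : Complex.exp (Real.pi * Complex.I / 3) = rr := rfl
  rw [hrr]
  have harg : rr * (rr * ((1 + rr) / 3)) = (1 + rr) / 3 - 1 := by
    linear_combination (1/3 : ℂ) * rr_cube + (1/3 : ℂ) * rr_sq
  have h2 : wzeta rr ((1 + rr) / 3 - 1) = (1 - rr) ^ 2 * wzeta rr ((1 + rr) / 3) := by
    rw [← harg, wzeta_rot, wzeta_rot]; ring
  have h3 : wzeta rr (1 - (1 + rr) / 3) = - wzeta rr ((1 + rr) / 3 - 1) := by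
    rw [show (1 : ℂ) - (1 + rr) / 3 = -((1 + rr) / 3 - 1) by ring, wzeta_neg]
  have h4 := sum_rel ((1 + rr) / 3)
  have h5 : eta2 rr = (1 - rr) * eta1 rr := by
    rw [eta1, eta2, show rr / 2 = rr * (1 / 2) by ring, wzeta_rot]
    ring
  have h6 : 2 * wzeta rr (1 / 2) = (1 - (1 - rr) ^ 2) * wzeta rr ((1 + rr) / 3) := by
    rw [← h4, h3, h2]; ring
  rw [h5, eta1, h6]
  linear_combination (3 - rr) * wzeta rr ((1 + rr) / 3) * rr_sq
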